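/- Let β be an algebraic integer of degree n ≥ 5 over ℚ with conjugates β_1, …, β_n, and suppose Gal(ℚ(β_1,…,β_n)/ℚ) = 𝔄_n. Let a_1, …, a_n ∈ ℤ, set α = a_1β_1 + ⋯ + a_nβ_n, and for a permutation τ ∈ 𝔖_n set α_τ = ∑_{i=1}^n a_i β_{τ(i)}. If τ is a transposition, then h(α_τ) ≤ 5·h(α) + log 5. -/

import Mathlib

open Polynomial

/-- The primitive integer minimal polynomial of an algebraic number `γ`. -/
noncomputable def intMinPoly (γ : ℂ) : Polynomial ℤ :=
  (IsLocalization.integerNormalization (nonZeroDivisors ℤ) (minpoly ℚ γ)).primPart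

/-- The Mahler measure `M(γ) = |a| ∏ max(1,|γᵢ|)`. -/
noncomputable def mahlerM (γ : ℂ) : ℝ :=
  ((intMinPoly γ).leadingCoeff.natAbs : ℝ) *
    (((minpoly ℚ γ).aroots ℂ).map (fun z => max 1 (‖z‖))).prod

/-- The logarithmic Weil height `h(γ) = log M(γ) / deg γ`. -/
noncomputable def heightH (γ : ℂ) : ℝ :=
  Real.log (mahlerM γ) / (minpoly ℚ γ).natDegree

/-- The image of the permutation representation of the Galois group of the splitting
field on the roots `B 0, …, B (n-1)`. -/
def galoisImage (n : ℕ) (B : Fin n → ℂ) : Set (Equiv.Perm (Fin n)) :=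
  {τ | ∃ σ : ℂ ≃ₐ[ℚ] ℂ, ∀ i, σ (B i) = B (τ i)}


set_option maxHeartbeats 2000000
set_option synthInstance.maxHeartbeats 400000

noncomputable def lmx (z : ℂ) : ℝ := Real.log (max 1 (‖z‖))


lemma lmx_nonneg (z : ℂ) : 0 ≤ lmx z := Real.log_nonneg (le_max_left _ _)

lemma max_abs_pos (z : ℂ) : (0:ℝ) < max 1 (‖z‖) :=
  lt_of_lt_of_le one_pos (le_max_left _ _)

lemma lmx_comb (z1 z2 z3 z4 z5 : ℂ) :
    lmx (z1 + z2 + z3 - z4 - z5) ≤ Real.log 5 + (lmx z1 + lmx z2 + lmx z3 + lmx z4 + lmx z5) := by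
  set m1 := max 1 (‖z1‖) with hm1
  set m2 := max 1 (‖z2‖) with hm2
  set m3 := max 1 (‖z3‖) with hm3
  set m4 := max 1 (‖z4‖) with hm4
  set m5 := max 1 (‖z5‖) with hm5
  have l1 : (1:ℝ) ≤ m1 := le_max_left _ _
  have l2 : (1:ℝ) ≤ m2 := le_max_left _ _
  have l3 : (1:ℝ) ≤ m3 := le_max_left _ _
  have l4 : (1:ℝ) ≤ m4 := le_max_left _ _
  have l5 : (1:ℝ) ≤ m5 := le_max_left _ _
  have e1 : ‖z1‖ ≤ m1 := le_max_right _ _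
  have e2 : ‖z2‖ ≤ m2 := le_max_right _ _
  have e3 : ‖z3‖ ≤ m3 := le_max_right _ _
  have e4 : ‖z4‖ ≤ m4 := le_max_right _ _
  have e5 : ‖z5‖ ≤ m5 := le_max_right _ _
  have habs : ‖z1 + z2 + z3 - z4 - z5‖ ≤
      ‖z1‖ + ‖z2‖ + ‖z3‖ + ‖z4‖ + ‖z5‖ := by
    calc ‖z1 + z2 + z3 - z4 - z5‖
        ≤ ‖z1 + z2 + z3 - z4‖ + ‖z5‖ := by
          simpa [sub_eq_add_neg] using norm_add_le (z1 + z2 + z3 - z4) (-z5)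
      _ ≤ (‖z1 + z2 + z3‖ + ‖z4‖) + ‖z5‖ := by
          have := norm_add_le (z1 + z2 + z3) (-z4)
          simp only [norm_neg] at this
          have h2 : ‖z1 + z2 + z3 - z4‖ ≤ ‖z1 + z2 + z3‖ + ‖z4‖ := by
            simpa [sub_eq_add_neg] using this
          linarith
      _ ≤ _ := by
          have h1 := norm_add_le z1 z2
          have h2 := norm_add_le (z1 + z2) z3
          linarith
  have one_le_mul' : ∀ {a b : ℝ}, 1 ≤ a → 1 ≤ b → 1 ≤ a * b := by
    intro a b ha hb
    exact le_trans ha (le_mul_of_one_le_right (by linarith) hb)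
  have p1 : (0:ℝ) < m1 := lt_of_lt_of_le one_pos l1
  have p2 : (0:ℝ) < m2 := lt_of_lt_of_le one_pos l2
  have p3 : (0:ℝ) < m3 := lt_of_lt_of_le one_pos l3
  have p4 : (0:ℝ) < m4 := lt_of_lt_of_le one_pos l4
  have p5 : (0:ℝ) < m5 := lt_of_lt_of_le one_pos l5
  have key : max 1 (‖z1 + z2 + z3 - z4 - z5‖) ≤ 5 * (m1 * m2 * m3 * m4 * m5) := by
    have hP1 : (1:ℝ) ≤ m1 * m2 * m3 * m4 * m5 :=
      one_le_mul' (one_le_mul' (one_le_mul' (one_le_mul' l1 l2) l3) l4) l5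
    have r1 : (1:ℝ) ≤ m2 * m3 * m4 * m5 := one_le_mul' (one_le_mul' (one_le_mul' l2 l3) l4) l5
    have r2 : (1:ℝ) ≤ m1 * m3 * m4 * m5 := one_le_mul' (one_le_mul' (one_le_mul' l1 l3) l4) l5
    have r3 : (1:ℝ) ≤ m1 * m2 * m4 * m5 := one_le_mul' (one_le_mul' (one_le_mul' l1 l2) l4) l5
    have r4 : (1:ℝ) ≤ m1 * m2 * m3 * m5 := one_le_mul' (one_le_mul' (one_le_mul' l1 l2) l3) l5
    have r5 : (1:ℝ) ≤ m1 * m2 * m3 * m4 := one_le_mul' (one_le_mul' (one_le_mul' l1 l2) l3) l4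
    have b1 : m1 ≤ m1 * m2 * m3 * m4 * m5 := by
      nlinarith [le_mul_of_one_le_right (le_of_lt p1) r1]
    have b2 : m2 ≤ m1 * m2 * m3 * m4 * m5 := by
      nlinarith [le_mul_of_one_le_right (le_of_lt p2) r2]
    have b3 : m3 ≤ m1 * m2 * m3 * m4 * m5 := by
      nlinarith [le_mul_of_one_le_right (le_of_lt p3) r3]
    have b4 : m4 ≤ m1 * m2 * m3 * m4 * m5 := by
      nlinarith [le_mul_of_one_le_right (le_of_lt p4) r4]
    have b5 : m5 ≤ m1 * m2 * m3 * m4 * m5 := by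
      nlinarith [le_mul_of_one_le_right (le_of_lt p5) r5]
    apply max_le <;> linarith
  have hlog := Real.log_le_log (max_abs_pos _) key
  rw [Real.log_mul (by norm_num) (by positivity), Real.log_mul (by positivity) (by positivity),
    Real.log_mul (by positivity) (by positivity), Real.log_mul (by positivity) (by positivity),
    Real.log_mul (by positivity) (by positivity)] at hlog
  simp only [lmx]
  linarith

lemma multiset_log_prod (s : Multiset ℂ) :
    Real.log ((s.map fun z => max 1 (‖z‖)).prod) = (s.map lmx).sum := by
  induction s using Multiset.induction_on with
  | empty => simp
  | cons a s ih =>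
    have hpos : (0:ℝ) < (s.map fun z => max 1 (‖z‖)).prod := by
      apply Multiset.prod_pos
      intro x hx
      obtain ⟨z, _, rfl⟩ := Multiset.mem_map.mp hx
      exact max_abs_pos z
    rw [Multiset.map_cons, Multiset.prod_cons, Real.log_mul (ne_of_gt (max_abs_pos a)) (ne_of_gt hpos),
      Multiset.map_cons, Multiset.sum_cons, ih]
    rfl

section KK

variable (K : IntermediateField ℚ ℂ) [FiniteDimensional ℚ K] [IsGalois ℚ K]

lemma aroots_eq_orbit (x : K) :
    ((minpoly ℚ (x : ℂ)).aroots ℂ) =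
      (Finset.image (fun y : K => (y : ℂ))
        (Finset.image (fun g : K ≃ₐ[ℚ] K => g x) Finset.univ)).val := by
  classical
  have hxi : IsIntegral ℚ x := IsIntegral.of_finite ℚ x
  have hpx : minpoly ℚ ((x : K) : ℂ) = minpoly ℚ x := by
    rw [show ((x : K) : ℂ) = algebraMap K ℂ x from rfl,
      minpoly.algebraMap_eq (algebraMap K ℂ).injective]
  have hpne : minpoly ℚ ((x : K) : ℂ) ≠ 0 := by
    rw [hpx]; exact minpoly.ne_zero hxi
  set O : Finset K := Finset.image (fun g : K ≃ₐ[ℚ] K => g x) Finset.univ with hO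
  have hroot : ∀ g : K ≃ₐ[ℚ] K, ((g x : K) : ℂ) ∈ (minpoly ℚ ((x : K) : ℂ)).aroots ℂ := by
    intro g
    rw [Polynomial.mem_aroots]
    refine ⟨hpne, ?_⟩
    have h2 : minpoly ℚ ((g x : K) : ℂ) = minpoly ℚ ((x : K) : ℂ) := by
      rw [show ((g x : K) : ℂ) = algebraMap K ℂ (g x) from rfl,
        minpoly.algebraMap_eq (algebraMap K ℂ).injective, minpoly.algEquiv_eq, hpx]
    rw [← h2]
    exact minpoly.aeval ℚ _
  have hOmap : ∀ g : K ≃ₐ[ℚ] K, Finset.image (fun y => g y) O = O := by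
    intro g
    ext z
    simp only [hO, Finset.mem_image, Finset.mem_univ, true_and]
    constructor
    · rintro ⟨y, ⟨g', rfl⟩, rfl⟩
      exact ⟨g * g', (AlgEquiv.mul_apply g g' x).symm⟩
    · rintro ⟨g', rfl⟩
      refine ⟨(g⁻¹ * g') x, ⟨g⁻¹ * g', rfl⟩, ?_⟩
      rw [← AlgEquiv.mul_apply, ← mul_assoc, mul_inv_cancel, one_mul]
  set q : Polynomial K := ∏ y ∈ O, (X - C y) with hq
  have hqmonic : q.Monic := monic_prod_of_monic _ _ (fun y _ => monic_X_sub_C y)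
  have hfixmap : ∀ g : K ≃ₐ[ℚ] K, q.map (g : K →+* K) = q := by
    intro g
    rw [hq, Polynomial.map_prod]
    simp only [Polynomial.map_sub, map_X, map_C]
    calc ∏ y ∈ O, (X - C (g y))
        = ∏ z ∈ Finset.image (fun y => g y) O, (X - C z) :=
          (Finset.prod_image (f := fun z => X - C z) (fun y _ z _ h => g.injective h)).symm
      _ = ∏ y ∈ O, (X - C y) := by rw [hOmap g]
  have hfix : ∀ (n : ℕ) (g : K ≃ₐ[ℚ] K), g (q.coeff n) = q.coeff n := by
    intro n g
    conv_rhs => rw [← hfixmap g]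
    rw [Polynomial.coeff_map]
    rfl
  have hbotfix : IntermediateField.fixedField (⊤ : Subgroup (K ≃ₐ[ℚ] K)) = ⊥ :=
    OrderIso.map_bot (IsGalois.intermediateFieldEquivSubgroup (F := ℚ) (E := K)).symm
  have hcoe : ∀ n, q.coeff n ∈ Set.range (algebraMap ℚ K) := by
    intro n
    have hbot : q.coeff n ∈ IntermediateField.fixedField (⊤ : Subgroup (K ≃ₐ[ℚ] K)) :=
      fun g => hfix n g.1
    rw [hbotfix, IntermediateField.mem_bot] at hbot
    exact hbot
  obtain ⟨q₀, hq₀⟩ := (Polynomial.mem_lifts _).mp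
    ((Polynomial.lifts_iff_coeff_lifts q).mpr hcoe)
  have hxO : x ∈ O := by
    simp only [hO, Finset.mem_image, Finset.mem_univ, true_and]
    exact ⟨1, rfl⟩
  have hq₀x : (Polynomial.aeval (x : K)) q₀ = 0 := by
    rw [Polynomial.aeval_def, ← Polynomial.eval_map, hq₀, hq, Polynomial.eval_prod]
    exact Finset.prod_eq_zero hxO (by simp)
  have hdvd : minpoly ℚ ((x : K) : ℂ) ∣ q₀ := by
    rw [hpx]
    exact minpoly.dvd ℚ x hq₀x
  have hq₀ne : q₀ ≠ 0 := by
    intro h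
    rw [h, Polynomial.map_zero] at hq₀
    exact hqmonic.ne_zero hq₀.symm
  have hle : (minpoly ℚ ((x : K) : ℂ)).aroots ℂ ≤ q₀.aroots ℂ :=
    Polynomial.roots.le_of_dvd (Polynomial.map_ne_zero hq₀ne)
      (Polynomial.map_dvd _ hdvd)
  have hmapq₀ : q₀.map (algebraMap ℚ ℂ) = ∏ y ∈ O, (X - C (y : ℂ)) := by
    rw [IsScalarTower.algebraMap_eq ℚ K ℂ, ← Polynomial.map_map, hq₀, hq,
      Polynomial.map_prod]
    simp
  have harootsq₀ : q₀.aroots ℂ = (Finset.image (fun y : K => (y : ℂ)) O).val := by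
    rw [Polynomial.aroots_def, hmapq₀,
      show (∏ y ∈ O, (X - C (y : ℂ))) = ∏ z ∈ Finset.image (fun y : K => (y : ℂ)) O, (X - C z) from
        (Finset.prod_image (f := fun z => X - C z) (fun y _ z _ h => Subtype.coe_injective h)).symm]
    exact Polynomial.roots_prod_X_sub_C _
  have hnodup : ((minpoly ℚ ((x : K) : ℂ)).aroots ℂ).Nodup := by
    apply Polynomial.nodup_roots
    apply Polynomial.Separable.map
    rw [hpx]
    exact Algebra.IsSeparable.isSeparable ℚ x
  have hsub : Finset.image (fun y : K => (y : ℂ)) O ⊆ ((minpoly ℚ ((x : K) : ℂ)).aroots ℂ).toFinset := by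
    intro z hz
    simp only [Finset.mem_image, hO, Finset.mem_univ, true_and] at hz
    obtain ⟨y, ⟨g, rfl⟩, rfl⟩ := hz
    exact Multiset.mem_toFinset.mpr (hroot g)
  have hcard : ((Finset.image (fun y : K => (y : ℂ)) O).val).card ≤ ((minpoly ℚ ((x : K) : ℂ)).aroots ℂ).card := by
    have h1 : (Finset.image (fun y : K => (y : ℂ)) O).card ≤ ((minpoly ℚ ((x : K) : ℂ)).aroots ℂ).toFinset.card :=
      Finset.card_le_card hsub
    rwa [Multiset.toFinset_card_of_nodup hnodup] at h1
  exact (Multiset.eq_of_le_of_card_le (le_trans hle (le_of_eq harootsq₀)) hcard)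


lemma group_sum (x : K) (f : ℂ → ℝ) :
    (Fintype.card (K ≃ₐ[ℚ] K) : ℝ) * (((minpoly ℚ ((x : K) : ℂ)).aroots ℂ).map f).sum
      = ((minpoly ℚ ((x : K) : ℂ)).natDegree : ℝ) * ∑ g : K ≃ₐ[ℚ] K, f ((g x : K) : ℂ) := by
  classical
  set φ : (K ≃ₐ[ℚ] K) → ℂ := fun g => ((g x : K) : ℂ) with hφ
  have horb : ((minpoly ℚ ((x : K) : ℂ)).aroots ℂ) = (Finset.univ.image φ).val := by
    rw [aroots_eq_orbit K x, Finset.image_image]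
    rfl
  set O' : Finset ℂ := Finset.univ.image φ with hO'
  have hfib : ∀ z ∈ O', (Finset.univ.filter (fun g => φ g = z)).card
      = (Finset.univ.filter (fun g : K ≃ₐ[ℚ] K => g x = x)).card := by
    intro z hz
    obtain ⟨g₀, _, rfl⟩ := Finset.mem_image.mp hz
    apply Finset.card_bij' (fun g _ => g₀⁻¹ * g) (fun h _ => g₀ * h)
    · intro g hg
      simp only [Finset.mem_filter, Finset.mem_univ, true_and] at hg ⊢
      have hgx : g x = g₀ x := Subtype.coe_injective hg
      rw [AlgEquiv.mul_apply, hgx, ← AlgEquiv.mul_apply, inv_mul_cancel, AlgEquiv.one_apply]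
    · intro h hh
      simp only [Finset.mem_filter, Finset.mem_univ, true_and] at hh ⊢
      simp only [hφ, AlgEquiv.mul_apply]
      rw [hh]
    · intro g _
      rw [← mul_assoc, mul_inv_cancel, one_mul]
    · intro h _
      rw [← mul_assoc, inv_mul_cancel, one_mul]
  set t : ℕ := (Finset.univ.filter (fun g : K ≃ₐ[ℚ] K => g x = x)).card with ht
  have hcardO' : O'.card = (minpoly ℚ ((x : K) : ℂ)).natDegree := by
    have h1 := (Polynomial.natDegree_map (p := minpoly ℚ ((x : K) : ℂ)) (algebraMap ℚ ℂ)).symm.trans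
      (IsAlgClosed.splits ((minpoly ℚ ((x : K) : ℂ)).map (algebraMap ℚ ℂ))).natDegree_eq_card_roots
    rw [show ((minpoly ℚ ((x : K) : ℂ)).map (algebraMap ℚ ℂ)).roots
        = (minpoly ℚ ((x : K) : ℂ)).aroots ℂ from rfl, horb] at h1
    exact h1.symm
  have hG : Fintype.card (K ≃ₐ[ℚ] K) = O'.card * t := by
    rw [← Finset.card_univ, Finset.card_eq_sum_card_image φ Finset.univ]
    rw [Finset.sum_congr rfl hfib, Finset.sum_const, smul_eq_mul]
  have hsum : ∑ g : K ≃ₐ[ℚ] K, f (φ g)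
      = ∑ z ∈ O', ((Finset.univ.filter (fun g => φ g = z)).card) • f z :=
    Finset.sum_comp f φ
  have hsum2 : ∑ g : K ≃ₐ[ℚ] K, f (φ g) = (t : ℝ) * ∑ z ∈ O', f z := by
    rw [hsum, Finset.sum_congr rfl (fun z hz => by rw [hfib z hz]), Finset.mul_sum]
    apply Finset.sum_congr rfl
    intro z _
    rw [nsmul_eq_mul]
  have hms : (((minpoly ℚ ((x : K) : ℂ)).aroots ℂ).map f).sum = ∑ z ∈ O', f z := by
    rw [horb]
    rfl
  rw [hms, hsum2, hG]
  push_cast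
  rw [hcardO']
  ring


end KK

lemma intMinPoly_lead_of_integral (γ : ℂ) (hγ : IsIntegral ℤ γ) :
    (intMinPoly γ).leadingCoeff.natAbs = 1 := by
  have hPm : (minpoly ℤ γ).Monic := minpoly.monic hγ
  have hfr : minpoly ℚ γ = (minpoly ℤ γ).map (algebraMap ℤ ℚ) :=
    minpoly.isIntegrallyClosed_eq_field_fractions ℚ ℂ hγ
  obtain ⟨c, hc⟩ := IsLocalization.integerNormalization_map_to_map
    (nonZeroDivisors ℤ) (minpoly ℚ γ)
  have hcne : (c : ℤ) ≠ 0 := nonZeroDivisors.coe_ne_zero c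
  have hN : IsLocalization.integerNormalization (nonZeroDivisors ℤ) (minpoly ℚ γ)
      = Polynomial.C (c : ℤ) * minpoly ℤ γ := by
    have hinj : Function.Injective (Polynomial.map (algebraMap ℤ ℚ)) :=
      fun p q h => Polynomial.map_injective _ (IsFractionRing.injective ℤ ℚ) h
    apply hinj
    rw [hc, hfr, Polynomial.map_mul, Polynomial.map_C, zsmul_eq_mul]
    congr 1
  have hcont : (Polynomial.C (c : ℤ) * minpoly ℤ γ).content = |(c : ℤ)| := by
    rw [Polynomial.content_C_mul, hPm.isPrimitive.content_eq_one, mul_one,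
      Int.abs_eq_normalize]
  have heq := (Polynomial.C (c : ℤ) * minpoly ℤ γ).eq_C_content_mul_primPart
  have hlead : (c : ℤ) = (Polynomial.C (c : ℤ) * minpoly ℤ γ).content *
      (Polynomial.C (c : ℤ) * minpoly ℤ γ).primPart.leadingCoeff := by
    have h1 : (Polynomial.C (c : ℤ) * minpoly ℤ γ).leadingCoeff = (c : ℤ) := by
      rw [Polynomial.leadingCoeff_mul, Polynomial.leadingCoeff_C, hPm.leadingCoeff, mul_one]
    conv_lhs => rw [← h1, heq]
    rw [Polynomial.leadingCoeff_mul, Polynomial.leadingCoeff_C]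
  have hnat : (c : ℤ).natAbs = (c : ℤ).natAbs *
      (Polynomial.C (c : ℤ) * minpoly ℤ γ).primPart.leadingCoeff.natAbs := by
    conv_lhs => rw [hlead]
    rw [Int.natAbs_mul, hcont, Int.natAbs_abs]
  have hne : (c : ℤ).natAbs ≠ 0 := Int.natAbs_ne_zero.mpr hcne
  have : (Polynomial.C (c : ℤ) * minpoly ℤ γ).primPart.leadingCoeff.natAbs = 1 :=
    (mul_left_cancel₀ hne (by rw [mul_one]; exact hnat.symm))
  rw [intMinPoly, hN]
  exact this

lemma prod_max_pos (s : Multiset ℂ) : (0:ℝ) < (s.map fun z => max 1 (‖z‖)).prod := by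
  apply Multiset.prod_pos
  intro x hx
  obtain ⟨z, _, rfl⟩ := Multiset.mem_map.mp hx
  exact max_abs_pos z

lemma one_le_lead (γ : ℂ) : 1 ≤ (((intMinPoly γ).leadingCoeff.natAbs : ℕ) : ℝ) := by
  have h1 : (intMinPoly γ) ≠ 0 := Polynomial.primPart_ne_zero _
  have h2 : (intMinPoly γ).leadingCoeff ≠ 0 := Polynomial.leadingCoeff_ne_zero.mpr h1
  have h3 : (intMinPoly γ).leadingCoeff.natAbs ≠ 0 := Int.natAbs_ne_zero.mpr h2
  exact_mod_cast Nat.one_le_iff_ne_zero.mpr h3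

lemma log_mahlerM_ge (γ : ℂ) :
    (((minpoly ℚ γ).aroots ℂ).map lmx).sum ≤ Real.log (mahlerM γ) := by
  rw [mahlerM, Real.log_mul (by have := one_le_lead γ; positivity)
    (ne_of_gt (prod_max_pos _)), multiset_log_prod]
  have : 0 ≤ Real.log (((intMinPoly γ).leadingCoeff.natAbs : ℕ) : ℝ) :=
    Real.log_nonneg (one_le_lead γ)
  linarith

lemma log_mahlerM_eq (γ : ℂ) (h : (intMinPoly γ).leadingCoeff.natAbs = 1) :
    Real.log (mahlerM γ) = (((minpoly ℚ γ).aroots ℂ).map lmx).sum := by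
  rw [mahlerM, h, Nat.cast_one, one_mul, multiset_log_prod]


lemma swap_identity {n : ℕ} (B : Fin n → ℂ) {i j k l m : Fin n}
    (hij : i ≠ j) (hik : i ≠ k) (hil : i ≠ l) (him : i ≠ m)
    (hjk : j ≠ k) (hjl : j ≠ l) (hjm : j ≠ m)
    (hkl : k ≠ l) (hkm : k ≠ m) (hlm : l ≠ m) (x : Fin n) :
    B (Equiv.swap i j x) =
      B ((Equiv.swap i k * Equiv.swap j l) x) + B ((Equiv.swap i m * Equiv.swap m j) x)
      + B ((Equiv.swap m j * Equiv.swap i m) x)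
      - B ((Equiv.swap i k * Equiv.swap j m) x) - B ((Equiv.swap i m * Equiv.swap j l) x) := by
  have e : ∀ (σ τ' : Equiv.Perm (Fin n)) (y : Fin n), (σ * τ') y = σ (τ' y) :=
    fun _ _ _ => rfl
  simp only [e]
  rcases eq_or_ne x i with rfl | hxi
  · simp [Equiv.swap_apply_def, hij, hik, hil, him, hjk, hjl, hjm, hkl, hkm, hlm,
      hij.symm, hik.symm, hil.symm, him.symm, hjk.symm, hjl.symm, hjm.symm,
      hkl.symm, hkm.symm, hlm.symm]
    try ring
  rcases eq_or_ne x j with rfl | hxj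
  · simp [Equiv.swap_apply_def, hij, hik, hil, him, hjk, hjl, hjm, hkl, hkm, hlm,
      hij.symm, hik.symm, hil.symm, him.symm, hjk.symm, hjl.symm, hjm.symm,
      hkl.symm, hkm.symm, hlm.symm]
    try ring
  rcases eq_or_ne x k with rfl | hxk
  · simp [Equiv.swap_apply_def, hij, hik, hil, him, hjk, hjl, hjm, hkl, hkm, hlm,
      hij.symm, hik.symm, hil.symm, him.symm, hjk.symm, hjl.symm, hjm.symm,
      hkl.symm, hkm.symm, hlm.symm]
    try ring
  rcases eq_or_ne x l with rfl | hxl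
  · simp [Equiv.swap_apply_def, hij, hik, hil, him, hjk, hjl, hjm, hkl, hkm, hlm,
      hij.symm, hik.symm, hil.symm, him.symm, hjk.symm, hjl.symm, hjm.symm,
      hkl.symm, hkm.symm, hlm.symm]
    try ring
  rcases eq_or_ne x m with rfl | hxm
  · simp [Equiv.swap_apply_def, hij, hik, hil, him, hjk, hjl, hjm, hkl, hkm, hlm,
      hij.symm, hik.symm, hil.symm, him.symm, hjk.symm, hjl.symm, hjm.symm,
      hkl.symm, hkm.symm, hlm.symm]
    try ring
  · simp [Equiv.swap_apply_def, hxi, hxj, hxk, hxl, hxm]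
    try ring

/-- Let `β` be an algebraic integer of degree `n ≥ 5` with conjugates
`Bᵢ` and Galois group `𝔄ₙ`.  Let `α = ∑ aᵢBᵢ` and, for `τ ∈ 𝔖ₙ`,
`α_τ = ∑ aᵢB_{τ(i)}`.  If `τ` is a transposition, then `h(α_τ) ≤ 5h(α) + log 5`. -/
theorem stmt_17 (n : ℕ) (hn : 5 ≤ n) (b : ℂ) (B : Fin n → ℂ)
    (hbint : IsIntegral ℤ b)
    (hdeg : (minpoly ℚ b).natDegree = n)
    (hroots : (minpoly ℚ b).aroots ℂ = Multiset.map B Finset.univ.val)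
    (hgal : galoisImage n B = (alternatingGroup (Fin n) : Set (Equiv.Perm (Fin n))))
    (a : Fin n → ℤ) (α : ℂ) (hα : α = ∑ i, (a i : ℂ) * B i)
    (τ : Equiv.Perm (Fin n)) (hτ : τ.IsSwap) :
    heightH (∑ i, (a i : ℂ) * B (τ i)) ≤ 5 * heightH α + Real.log 5 := by
  classical
  obtain ⟨i, j, hij, htau⟩ := hτ
  subst htau
  -- pick three auxiliary indices
  have hpick : ∀ (s : Finset (Fin n)), s.card < n → ∃ x, x ∉ s := by
    intro s hs
    by_contra hcon
    push_neg at hcon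
    have h2 : (Finset.univ : Finset (Fin n)).card ≤ s.card :=
      Finset.card_le_card (fun x _ => hcon x)
    rw [Finset.card_univ, Fintype.card_fin] at h2
    omega
  obtain ⟨k, hk⟩ := hpick {i, j} (by
    have h1 : ({i, j} : Finset (Fin n)).card ≤ 2 :=
      le_trans (Finset.card_insert_le _ _) (by simp)
    omega)
  obtain ⟨l, hl⟩ := hpick {i, j, k} (by
    have h1 : ({i, j, k} : Finset (Fin n)).card ≤ 3 :=
      le_trans (Finset.card_insert_le _ _) (Nat.succ_le_succ
        (le_trans (Finset.card_insert_le _ _) (by simp)))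
    omega)
  obtain ⟨m, hm⟩ := hpick {i, j, k, l} (by
    have h1 : ({i, j, k, l} : Finset (Fin n)).card ≤ 4 :=
      le_trans (Finset.card_insert_le _ _) (Nat.succ_le_succ
        (le_trans (Finset.card_insert_le _ _) (Nat.succ_le_succ
          (le_trans (Finset.card_insert_le _ _) (by simp)))))
    omega)
  simp only [Finset.mem_insert, Finset.mem_singleton, not_or] at hk hl hm
  obtain ⟨hki, hkj⟩ := hk
  obtain ⟨hli, hlj, hlk⟩ := hl
  obtain ⟨hmi, hmj, hmk, hml⟩ := hm
  have hik : i ≠ k := Ne.symm hki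
  have hjk : j ≠ k := Ne.symm hkj
  have hil : i ≠ l := Ne.symm hli
  have hjl : j ≠ l := Ne.symm hlj
  have hkl : k ≠ l := Ne.symm hlk
  have him : i ≠ m := Ne.symm hmi
  have hjm : j ≠ m := Ne.symm hmj
  have hkm : k ≠ m := Ne.symm hmk
  have hlm : l ≠ m := Ne.symm hml
  -- the splitting field
  have hbQ : IsIntegral ℚ b := hbint.tower_top
  have hpirr : Irreducible (minpoly ℚ b) := minpoly.irreducible hbQ
  have hpsep : (minpoly ℚ b).Separable := hpirr.separable
  have hsplit : ((minpoly ℚ b).map (algebraMap ℚ ℂ)).Splits := IsAlgClosed.splits _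
  let K : IntermediateField ℚ ℂ := IntermediateField.adjoin ℚ ((minpoly ℚ b).rootSet ℂ)
  haveI hKsf : Polynomial.IsSplittingField ℚ K (minpoly ℚ b) :=
    IntermediateField.adjoin_rootSet_isSplittingField hsplit
  haveI : FiniteDimensional ℚ K := Polynomial.IsSplittingField.finiteDimensional K (minpoly ℚ b)
  haveI : IsGalois ℚ K := IsGalois.of_separable_splitting_field hpsep
  have hBroot : ∀ i', B i' ∈ (minpoly ℚ b).aroots ℂ := by
    intro i'
    rw [hroots]
    exact Multiset.mem_map.mpr ⟨i', by simp, rfl⟩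
  have hpbne : minpoly ℚ b ≠ 0 := minpoly.ne_zero hbQ
  have hBK : ∀ i', B i' ∈ K := by
    intro i'
    apply IntermediateField.subset_adjoin ℚ _
    have h1 := hBroot i'
    rw [Polynomial.mem_aroots] at h1
    rw [Polynomial.mem_rootSet]
    exact h1
  set Bk : Fin n → K := fun i' => ⟨B i', hBK i'⟩ with hBk
  -- realization of even permutations
  have hreal : ∀ σ : Equiv.Perm (Fin n), Equiv.Perm.sign σ = 1 →
      ∃ g : K ≃ₐ[ℚ] K, ∀ i', g (Bk i') = Bk (σ i') := by
    intro σ hσ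
    have hmem : σ ∈ galoisImage n B := by
      rw [hgal]
      exact Equiv.Perm.mem_alternatingGroup.mpr hσ
    obtain ⟨σc, hσc⟩ := hmem
    refine ⟨σc.restrictNormal K, fun i' => ?_⟩
    apply Subtype.coe_injective
    have hcomm := AlgEquiv.restrictNormal_commutes σc K (Bk i')
    calc ((σc.restrictNormal K) (Bk i') : ℂ) = σc ((Bk i' : K) : ℂ) := hcomm
      _ = σc (B i') := rfl
      _ = B (σ i') := hσc i'
      _ = ((Bk (σ i') : K) : ℂ) := rfl
  -- integrality of the roots
  have hBint : ∀ i', IsIntegral ℤ (B i') := by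
    intro i'
    refine ⟨minpoly ℤ b, minpoly.monic hbint, ?_⟩
    have h1 := hBroot i'
    rw [Polynomial.mem_aroots] at h1
    have h2 := h1.2
    have hfrb : minpoly ℚ b = (minpoly ℤ b).map (algebraMap ℤ ℚ) :=
      minpoly.isIntegrallyClosed_eq_field_fractions ℚ ℂ hbint
    rw [hfrb, Polynomial.aeval_map_algebraMap] at h2
    rwa [Polynomial.aeval_def] at h2
  -- the two elements
  set xα : K := ∑ i', ((a i' : ℤ) : K) * Bk i' with hxα
  set xτ : K := ∑ i', ((a i' : ℤ) : K) * Bk (Equiv.swap i j i') with hxτ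
  have hvalα : ((xα : K) : ℂ) = ∑ i', (a i' : ℂ) * B i' := by
    show (algebraMap K ℂ) xα = _
    rw [hxα, map_sum]
    refine Finset.sum_congr rfl fun i' _ => ?_
    rw [map_mul, map_intCast]
    rfl
  have hvalτ : ((xτ : K) : ℂ) = ∑ i', (a i' : ℂ) * B (Equiv.swap i j i') := by
    show (algebraMap K ℂ) xτ = _
    rw [hxτ, map_sum]
    refine Finset.sum_congr rfl fun i' _ => ?_
    rw [map_mul, map_intCast]
    rfl
  -- the five even permutations
  obtain ⟨g1, hg1⟩ := hreal (Equiv.swap i k * Equiv.swap j l) (by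
    rw [Equiv.Perm.sign_mul, Equiv.Perm.sign_swap hik, Equiv.Perm.sign_swap hjl]
    exact Int.units_mul_self _)
  obtain ⟨g2, hg2⟩ := hreal (Equiv.swap i m * Equiv.swap m j) (by
    rw [Equiv.Perm.sign_mul, Equiv.Perm.sign_swap him, Equiv.Perm.sign_swap hmj]
    exact Int.units_mul_self _)
  obtain ⟨g3, hg3⟩ := hreal (Equiv.swap m j * Equiv.swap i m) (by
    rw [Equiv.Perm.sign_mul, Equiv.Perm.sign_swap hmj, Equiv.Perm.sign_swap him]
    exact Int.units_mul_self _)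
  obtain ⟨g4, hg4⟩ := hreal (Equiv.swap i k * Equiv.swap j m) (by
    rw [Equiv.Perm.sign_mul, Equiv.Perm.sign_swap hik, Equiv.Perm.sign_swap hjm]
    exact Int.units_mul_self _)
  obtain ⟨g5, hg5⟩ := hreal (Equiv.swap i m * Equiv.swap j l) (by
    rw [Equiv.Perm.sign_mul, Equiv.Perm.sign_swap him, Equiv.Perm.sign_swap hjl]
    exact Int.units_mul_self _)
  -- action on xα
  have hact : ∀ (g : K ≃ₐ[ℚ] K) (σ : Equiv.Perm (Fin n)),
      (∀ i', g (Bk i') = Bk (σ i')) → ((g xα : K) : ℂ) = ∑ i', (a i' : ℂ) * B (σ i') := by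
    intro g σ hg
    have h1 : g xα = ∑ i', ((a i' : ℤ) : K) * Bk (σ i') := by
      rw [hxα, map_sum]
      refine Finset.sum_congr rfl fun i' _ => ?_
      rw [map_mul, map_intCast, hg i']
    rw [h1]
    show (algebraMap K ℂ) _ = _
    rw [map_sum]
    refine Finset.sum_congr rfl fun i' _ => ?_
    rw [map_mul, map_intCast]
    rfl
  -- the key identity in K
  have hKid : xτ = g1 xα + g2 xα + g3 xα - g4 xα - g5 xα := by
    apply Subtype.coe_injective
    push_cast
    rw [hvalτ, hact g1 _ hg1, hact g2 _ hg2, hact g3 _ hg3, hact g4 _ hg4, hact g5 _ hg5]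
    rw [← Finset.sum_add_distrib, ← Finset.sum_add_distrib, ← Finset.sum_sub_distrib,
      ← Finset.sum_sub_distrib]
    refine Finset.sum_congr rfl fun i' _ => ?_
    have hid := swap_identity B hij hik hil him hjk hjl hjm hkl hkm hlm i'
    rw [hid]
    ring
  -- per-element bound
  have hper : ∀ g : K ≃ₐ[ℚ] K, lmx ((g xτ : K) : ℂ) ≤ Real.log 5 +
      (lmx (((g * g1) xα : K) : ℂ) + lmx (((g * g2) xα : K) : ℂ) + lmx (((g * g3) xα : K) : ℂ)
        + lmx (((g * g4) xα : K) : ℂ) + lmx (((g * g5) xα : K) : ℂ)) := by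
    intro g
    have hco : ((g xτ : K) : ℂ) = (((g * g1) xα : K) : ℂ) + (((g * g2) xα : K) : ℂ)
        + (((g * g3) xα : K) : ℂ) - (((g * g4) xα : K) : ℂ) - (((g * g5) xα : K) : ℂ) := by
      have h1 : g xτ = (g * g1) xα + (g * g2) xα + (g * g3) xα - (g * g4) xα - (g * g5) xα := by
        rw [hKid, map_sub, map_sub, map_add, map_add]
        simp only [AlgEquiv.mul_apply]
      rw [h1]
      push_cast
      ring
    rw [hco]
    exact lmx_comb _ _ _ _ _
  -- sum over the group
  set G : ℕ := Fintype.card (K ≃ₐ[ℚ] K) with hGdef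
  have hGpos : 0 < G := Fintype.card_pos
  set Sτ : ℝ := ∑ g : K ≃ₐ[ℚ] K, lmx ((g xτ : K) : ℂ) with hSτ
  set Sα : ℝ := ∑ g : K ≃ₐ[ℚ] K, lmx ((g xα : K) : ℂ) with hSα
  have hreidx : ∀ gk : K ≃ₐ[ℚ] K,
      ∑ g : K ≃ₐ[ℚ] K, lmx (((g * gk) xα : K) : ℂ) = Sα := by
    intro gk
    rw [hSα]
    exact Fintype.sum_bijective (· * gk) (Group.mulRight_bijective gk) _ _ (fun g => rfl)
  have hsum : Sτ ≤ G * Real.log 5 + 5 * Sα := by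
    have h1 : Sτ ≤ ∑ g : K ≃ₐ[ℚ] K, (Real.log 5 +
        (lmx (((g * g1) xα : K) : ℂ) + lmx (((g * g2) xα : K) : ℂ) + lmx (((g * g3) xα : K) : ℂ)
          + lmx (((g * g4) xα : K) : ℂ) + lmx (((g * g5) xα : K) : ℂ))) :=
      Finset.sum_le_sum (fun g _ => hper g)
    rw [Finset.sum_add_distrib, Finset.sum_const, Finset.card_univ] at h1
    rw [Finset.sum_add_distrib, Finset.sum_add_distrib, Finset.sum_add_distrib,
      Finset.sum_add_distrib] at h1
    rw [hreidx g1, hreidx g2, hreidx g3, hreidx g4, hreidx g5] at h1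
    rw [nsmul_eq_mul, ← hGdef] at h1
    linarith
  -- height of xτ
  have hτint : IsIntegral ℤ ((xτ : K) : ℂ) := by
    rw [hvalτ]
    apply IsIntegral.sum
    intro i' _
    refine IsIntegral.mul ⟨X - C (a i'), monic_X_sub_C _, by simp⟩ (hBint _)
  have hleadτ := intMinPoly_lead_of_integral _ hτint
  have hdτ : 0 < (minpoly ℚ ((xτ : K) : ℂ)).natDegree := by
    rw [show ((xτ : K) : ℂ) = algebraMap K ℂ xτ from rfl,
      minpoly.algebraMap_eq (algebraMap K ℂ).injective]
    exact minpoly.natDegree_pos (IsIntegral.of_finite ℚ xτ)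
  have hdα : 0 < (minpoly ℚ ((xα : K) : ℂ)).natDegree := by
    rw [show ((xα : K) : ℂ) = algebraMap K ℂ xα from rfl,
      minpoly.algebraMap_eq (algebraMap K ℂ).injective]
    exact minpoly.natDegree_pos (IsIntegral.of_finite ℚ xα)
  have hGτ := group_sum K xτ lmx
  have hGα := group_sum K xα lmx
  have hhτ : heightH ((xτ : K) : ℂ) = Sτ / G := by
    rw [heightH, log_mahlerM_eq _ hleadτ]
    rw [div_eq_div_iff (Nat.cast_ne_zero.mpr hdτ.ne' : ((minpoly ℚ ((xτ : K) : ℂ)).natDegree : ℝ) ≠ 0)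
      (Nat.cast_ne_zero.mpr hGpos.ne' : (G : ℝ) ≠ 0)]
    rw [← hSτ] at hGτ
    rw [← hGdef] at hGτ
    linarith
  have hhα : Sα / G ≤ heightH ((xα : K) : ℂ) := by
    rw [heightH]
    rw [div_le_div_iff₀ (by exact_mod_cast hGpos : (0:ℝ) < (G:ℝ))
      (by exact_mod_cast hdα : (0:ℝ) < ((minpoly ℚ ((xα : K) : ℂ)).natDegree : ℝ))]
    have h3 := log_mahlerM_ge ((xα : K) : ℂ)
    rw [← hSα, ← hGdef] at hGα
    nlinarith [hGα, h3, (show (0:ℝ) < G by exact_mod_cast hGpos),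
      (show (0:ℝ) < ((minpoly ℚ ((xα : K) : ℂ)).natDegree : ℝ) by exact_mod_cast hdα)]
  -- final assembly
  have hgoalτ : (∑ i', (a i' : ℂ) * B (Equiv.swap i j i')) = ((xτ : K) : ℂ) := hvalτ.symm
  have hgoalα : α = ((xα : K) : ℂ) := by rw [hα, hvalα]
  rw [hgoalτ, hgoalα, hhτ]
  have hG0 : (0:ℝ) < G := by exact_mod_cast hGpos
  have h5 : Sτ / G ≤ Real.log 5 + 5 * (Sα / G) := by
    rw [div_le_iff₀ hG0]
    calc Sτ ≤ G * Real.log 5 + 5 * Sα := hsum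
      _ = (Real.log 5 + 5 * (Sα / ↑G)) * ↑G := by field_simp
  calc Sτ / ↑G ≤ Real.log 5 + 5 * (Sα / ↑G) := h5
    _ ≤ Real.log 5 + 5 * heightH ((xα : K) : ℂ) := by linarith [hhα]
    _ = 5 * heightH ((xα : K) : ℂ) + Real.log 5 := by ring
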